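/- Validity of a labelled atomic sequent over ℚ is equivalent to existence of a matching family of labelling functions: for a labelled sequent Γ ⊢ Δ where Γ, Δ are finite multisets of pairs (x, p) of a label and a propositional variable, the sequent is valid (for every rational valuation v of variables, some labelling function f : atomic labels → {0,1}, extended multiplicatively to all labels with f(1)=1, satisfies Σ_{(x,p)∈Γ, f(x)=1} v(p) ≤ Σ_{(y,q)∈Δ, f(y)=1} v(q)) if and only if there exist finitely many labelling functions f₁,…,fₙ such that the multiset ⋃ᵢ fᵢ(Γ) equals ⋃ᵢ fᵢ(Δ), where f(Γ) = {p : (x,p) ∈ Γ, f(x) = 1}. -/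

import Mathlib

/-- A label is a finite product of atomic labels (the empty multiset is the
unit label `1`). A labelling function `f : ℕ → Bool` on atomic labels extends
multiplicatively: a label is sent to `1` iff all its atomic labels are. -/
def labelOn (f : ℕ → Bool) (x : Multiset ℕ) : Prop := ∀ a ∈ x, f a = true

instance (f : ℕ → Bool) : DecidablePred (labelOn f) := fun x =>
  inferInstanceAs (Decidable (∀ a ∈ x, f a = true))

/-- `fApp f Γ` is the multiset of variables of `Γ` whose labels are mapped
to `1` by `f`. -/
def fApp (f : ℕ → Bool) (Γ : Multiset (Multiset ℕ × ℕ)) : Multiset ℕ :=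
  (Γ.filter fun z => labelOn f z.1).map Prod.snd

namespace S19

/-- easy direction -/
theorem easy (Γ Δ : Multiset (Multiset ℕ × ℕ)) (n : ℕ) (hn : 0 < n)
    (fs : Fin n → ℕ → Bool)
    (h : (Finset.univ.sum fun i => fApp (fs i) Γ) =
        (Finset.univ.sum fun i => fApp (fs i) Δ)) (v : ℕ → ℚ) :
    ∃ f : ℕ → Bool, ((fApp f Γ).map v).sum ≤ ((fApp f Δ).map v).sum := by
  by_contra hc
  push_neg at hc
  have key : ∀ i : Fin n, ((fApp (fs i) Δ).map v).sum < ((fApp (fs i) Γ).map v).sum :=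
    fun i => hc (fs i)
  have hsum : (Finset.univ.sum fun i : Fin n => ((fApp (fs i) Δ).map v).sum) <
      (Finset.univ.sum fun i : Fin n => ((fApp (fs i) Γ).map v).sum) :=
    Finset.sum_lt_sum_of_nonempty (by simp [Finset.univ_nonempty_iff, Fin.pos_iff_nonempty.mp hn])
      fun i _ => key i
  have hmap : ∀ (Θ : Multiset (Multiset ℕ × ℕ)),
      (Finset.univ.sum fun i : Fin n => ((fApp (fs i) Θ).map v).sum) =
      (((Finset.univ.sum fun i : Fin n => fApp (fs i) Θ)).map v).sum := by
    intro Θ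
    exact (map_sum (⟨⟨fun m => (Multiset.map v m).sum, by simp⟩,
      fun x y => by simp⟩ : Multiset ℕ →+ ℚ) _ _).symm
  rw [hmap Γ, hmap Δ, h] at hsum
  exact lt_irrefl _ hsum



variable (Γ Δ : Multiset (Multiset ℕ × ℕ))

/-- all atomic labels appearing in Γ ++ Δ -/
def atoms : Finset ℕ := ((Γ + Δ).map Prod.fst).sum.toFinset
/-- all variables appearing -/
def vars : Finset ℕ := ((Γ + Δ).map Prod.snd).toFinset

abbrev E := (↑(vars Γ Δ) : Type) → ℝ

noncomputable def wvec (f : ℕ → Bool) : E Γ Δ :=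
  fun p => ((fApp f Δ).count ↑p : ℝ) - ((fApp f Γ).count ↑p : ℝ)

-- fApp depends only on values on atoms
theorem fApp_congr {f g : ℕ → Bool} (Θ : Multiset (Multiset ℕ × ℕ))
    (hΘ : ∀ z ∈ Θ, ∀ a ∈ z.1, f a = g a) : fApp f Θ = fApp g Θ := by
  unfold fApp
  congr 1
  apply Multiset.filter_congr
  intro z hz
  constructor <;> (intro h a ha; rw [labelOn] at h)
  · rw [← hΘ z hz a ha]; exact h a ha
  · rw [hΘ z hz a ha]; exact h a ha

theorem mem_atoms {z : Multiset ℕ × ℕ} (hz : z ∈ Γ + Δ) {a : ℕ} (ha : a ∈ z.1) :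
    a ∈ atoms Γ Δ := by
  simp only [atoms, Multiset.mem_toFinset]
  have : z.1 ∈ (Γ + Δ).map Prod.fst := Multiset.mem_map_of_mem _ hz
  have hj : ((Γ + Δ).map Prod.fst).sum = ((Γ + Δ).map Prod.fst).join := by
    simp [Multiset.join]
  rw [hj, Multiset.mem_join]
  exact ⟨z.1, this, ha⟩

theorem wvec_congr {f g : ℕ → Bool} (h : ∀ a ∈ atoms Γ Δ, f a = g a) :
    wvec Γ Δ f = wvec Γ Δ g := by
  have h1 : fApp f Γ = fApp g Γ := fApp_congr Γ fun z hz a ha =>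
    h a (mem_atoms Γ Δ (by simp [hz]) ha)
  have h2 : fApp f Δ = fApp g Δ := fApp_congr Δ fun z hz a ha =>
    h a (mem_atoms Γ Δ (by simp [hz]) ha)
  unfold wvec; rw [h1, h2]

def D : Set (E Γ Δ) := Set.range (wvec Γ Δ)

theorem D_finite : (D Γ Δ).Finite := by
  have : D Γ Δ ⊆ Set.range (fun g : (↑(atoms Γ Δ) : Type) → Bool =>
      wvec Γ Δ (fun a => if h : a ∈ atoms Γ Δ then g ⟨a, h⟩ else false)) := by
    rintro _ ⟨f, rfl⟩
    refine ⟨fun a => f ↑a, ?_⟩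
    apply wvec_congr
    intro a ha
    simp [ha]
  exact (Set.finite_range _).subset this

theorem fApp_toFinset_subset (f : ℕ → Bool) (Θ : Multiset (Multiset ℕ × ℕ)) :
    (fApp f Θ).toFinset ⊆ (Θ.map Prod.snd).toFinset := by
  intro p hp
  simp only [Multiset.mem_toFinset, fApp] at *
  obtain ⟨z, hz, rfl⟩ := Multiset.mem_map.mp hp
  exact Multiset.mem_map_of_mem _ (Multiset.mem_of_mem_filter hz)

-- bridge: multiset map-sum as Finset sum over vars of counts
theorem bridge (v : ℕ → ℚ) (f : ℕ → Bool) (Θ : Multiset (Multiset ℕ × ℕ))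
    (hΘ : (fApp f Θ).toFinset ⊆ vars Γ Δ) :
    ((fApp f Θ).map v).sum = ∑ p ∈ vars Γ Δ, ((fApp f Θ).count p : ℚ) * v p := by
  rw [Finset.sum_multiset_map_count]
  rw [Finset.sum_subset hΘ]
  · apply Finset.sum_congr rfl; intro p _; rw [nsmul_eq_mul]
  · intro p _ hp
    simp only [Multiset.mem_toFinset] at hp
    simp [Multiset.count_eq_zero_of_notMem hp]

-- count bound
theorem count_fApp_le (f : ℕ → Bool) (Θ : Multiset (Multiset ℕ × ℕ)) (p : ℕ) :
    (fApp f Θ).count p ≤ Multiset.card Θ := by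
  calc (fApp f Θ).count p ≤ Multiset.card (fApp f Θ) := Multiset.count_le_card _ _
  _ ≤ Multiset.card Θ := by
    unfold fApp; rw [Multiset.card_map]; exact Multiset.card_le_card (Multiset.filter_le _ _)


theorem zero_mem_hull
    (h : ∀ v : ℕ → ℚ, ∃ f : ℕ → Bool,
      ((fApp f Γ).map v).sum ≤ ((fApp f Δ).map v).sum) :
    (0 : E Γ Δ) ∈ convexHull ℝ (D Γ Δ) := by
  by_contra h0
  obtain ⟨φ, u, hlt, hu⟩ := geometric_hahn_banach_closed_point
    (convex_convexHull ℝ _) ((D_finite Γ Δ).isClosed_convexHull (𝕜 := ℝ)) h0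
  rw [map_zero] at hu
  -- representation of φ by coordinates
  set r : (↑(vars Γ Δ) : Type) → ℝ := fun p => φ (Pi.single p 1) with hr
  have hrep : ∀ y : E Γ Δ, φ y = ∑ p : ↑(vars Γ Δ), y p * r p := by
    intro y
    have hy : y = ∑ p : ↑(vars Γ Δ), y p • (Pi.single p 1 : E Γ Δ) := by
      funext j
      rw [Finset.sum_apply]
      rw [Finset.sum_eq_single j]
      · simp
      · intro b _ hbj; simp [Pi.single_apply, hbj]
      · simp
    conv_lhs => rw [hy]
    rw [map_sum]
    simp [hr]
  -- bound on coordinates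
  set C : ℝ := (Multiset.card Γ : ℝ) + (Multiset.card Δ : ℝ) with hCdef
  have hC0 : 0 ≤ C := by positivity
  have hC : ∀ (f : ℕ → Bool) (p : ↑(vars Γ Δ)), |wvec Γ Δ f p| ≤ C := by
    intro f p
    have h1 := count_fApp_le f Γ (↑p)
    have h2 := count_fApp_le f Δ (↑p)
    rw [wvec, abs_sub_comm]
    rw [abs_sub_le_iff]
    constructor <;> [skip; skip] <;>
    · have := (Nat.cast_le (α := ℝ)).mpr h1
      have := (Nat.cast_le (α := ℝ)).mpr h2
      simp only [hCdef]
      nlinarith [Nat.cast_nonneg (α := ℝ) ((fApp f Γ).count ↑p),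
        Nat.cast_nonneg (α := ℝ) ((fApp f Δ).count ↑p)]
  set B : ℝ := ((vars Γ Δ).card : ℝ) * C with hBdef
  have hB0 : 0 ≤ B := mul_nonneg (Nat.cast_nonneg _) hC0
  set ε : ℝ := -u / (2 * (B + 1)) with hεdef
  have hε : 0 < ε := by
    apply div_pos (by linarith) (by linarith)
  have hq : ∀ p : ↑(vars Γ Δ), ∃ qp : ℚ, |r p - ↑qp| < ε :=
    fun p => exists_rat_near (r p) hε
  choose q hq using hq
  set v : ℕ → ℚ := fun p => if hp : p ∈ vars Γ Δ then q ⟨p, hp⟩ else 0 with hv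
  obtain ⟨f, hf⟩ := h v
  -- rational inequality to real
  have hbΓ := bridge Γ Δ v f Γ ((fApp_toFinset_subset f Γ).trans (by
    intro p hp; simp only [vars, Multiset.mem_toFinset, Multiset.map_add,
      Multiset.mem_add] at *; exact Or.inl hp))
  have hbΔ := bridge Γ Δ v f Δ ((fApp_toFinset_subset f Δ).trans (by
    intro p hp; simp only [vars, Multiset.mem_toFinset, Multiset.map_add,
      Multiset.mem_add] at *; exact Or.inr hp))
  rw [hbΓ, hbΔ] at hf
  have h2 : (0:ℝ) ≤ ∑ p : ↑(vars Γ Δ), wvec Γ Δ f p * (q p : ℝ) := by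
    have hf' : (0:ℚ) ≤ ∑ p ∈ vars Γ Δ,
        (((fApp f Δ).count p : ℚ) - ((fApp f Γ).count p : ℚ)) * v p := by
      rw [Finset.sum_congr rfl (fun p _ => sub_mul _ _ (v p)), Finset.sum_sub_distrib]
      linarith
    have hcast := (Rat.cast_le (K := ℝ)).mpr hf'
    rw [Rat.cast_sum] at hcast
    rw [Rat.cast_zero] at hcast
    rw [← Finset.sum_attach (vars Γ Δ)] at hcast
    rw [Finset.univ_eq_attach]
    refine le_of_le_of_eq hcast (Finset.sum_congr rfl fun p _ => ?_)
    have hvp : v ↑p = q p := by simp [hv, p.2]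
    rw [hvp]
    push_cast
    rw [wvec]
  have h3 : φ (wvec Γ Δ f) < u := hlt _ (subset_convexHull ℝ _ ⟨f, rfl⟩)
  have h4 : ∑ p : ↑(vars Γ Δ), wvec Γ Δ f p * (q p : ℝ)
      = φ (wvec Γ Δ f) + ∑ p : ↑(vars Γ Δ), wvec Γ Δ f p * ((q p : ℝ) - r p) := by
    rw [hrep, ← Finset.sum_add_distrib]
    exact Finset.sum_congr rfl fun p _ => by ring
  have h5 : ∑ p : ↑(vars Γ Δ), wvec Γ Δ f p * ((q p : ℝ) - r p) ≤ B * ε := by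
    calc ∑ p : ↑(vars Γ Δ), wvec Γ Δ f p * ((q p : ℝ) - r p)
        ≤ ∑ p : ↑(vars Γ Δ), C * ε := by
          apply Finset.sum_le_sum
          intro p _
          calc wvec Γ Δ f p * ((q p : ℝ) - r p)
              ≤ |wvec Γ Δ f p * ((q p : ℝ) - r p)| := le_abs_self _
            _ = |wvec Γ Δ f p| * |(q p : ℝ) - r p| := abs_mul _ _
            _ ≤ C * ε := by
                apply mul_le_mul (hC f p) (le_of_lt (by rw [abs_sub_comm]; exact hq p))
                  (abs_nonneg _) hC0
      _ = B * ε := by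
          rw [Finset.sum_const, Finset.card_univ]
          simp [hBdef, Fintype.card_coe, mul_assoc]
  have hBε : B * ε ≤ -u / 2 := by
    have hB2 : (0:ℝ) < 2 * (B + 1) := by linarith
    have heq : B * ε = B * -u / (2 * (B + 1)) := by rw [hεdef]; ring
    rw [heq, div_le_div_iff₀ hB2 (by norm_num : (0:ℝ) < 2)]
    nlinarith
  rw [h4] at h2
  linarith


theorem exists_multiset
    (h0 : (0 : E Γ Δ) ∈ convexHull ℝ (D Γ Δ)) :
    ∃ M : Multiset (ℕ → Bool), M ≠ 0 ∧
      (M.map fun f => fApp f Γ).sum = (M.map fun f => fApp f Δ).sum := by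
  classical
  -- Caratheodory
  rw [convexHull_eq_union] at h0
  simp only [Set.mem_iUnion] at h0
  obtain ⟨t, hts, hai, h0⟩ := h0
  rw [Finset.convexHull_eq] at h0
  obtain ⟨wt, hw0, hw1, hcm⟩ := h0
  have hsum : ∑ d ∈ t, wt d • d = 0 := by
    have h := Finset.centerMass_eq_of_sum_1 t id hw1
    rw [h] at hcm
    simpa using hcm
  -- pick preimages
  have hFex : ∀ d ∈ t, ∃ f : ℕ → Bool, wvec Γ Δ f = d := fun d hd => hts hd
  set F : E Γ Δ → (ℕ → Bool) := fun d =>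
    if h : ∃ f : ℕ → Bool, wvec Γ Δ f = d then h.choose else fun _ => true with hFdef
  have hF : ∀ d ∈ t, wvec Γ Δ (F d) = d := by
    intro d hd
    have h := hFex d hd
    simp only [hFdef, dif_pos h]
    exact h.choose_spec
  -- rational retraction
  obtain ⟨π, hπ⟩ := (Algebra.linearMap ℚ ℝ).exists_leftInverse_of_injective
    (LinearMap.ker_eq_bot.mpr fun a b hab => by
      simpa using hab)
  have hπq : ∀ q : ℚ, π ((q : ℝ)) = q := by
    intro q
    have := LinearMap.congr_fun hπ q
    simpa [Algebra.linearMap_apply, eq_ratCast (algebraMap ℚ ℝ) q] using this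
  have hπsmul : ∀ (q : ℚ) (x : ℝ), π ((q : ℝ) * x) = q * π x := by
    intro q x
    have : (q : ℝ) * x = q • x := by rw [Rat.smul_def]
    rw [this, map_smul, smul_eq_mul]
  set w' : E Γ Δ → ℚ := fun d => π (wt d) with hw'def
  -- (a) sum one
  have ha : ∑ d ∈ t, w' d = 1 := by
    have := map_sum π wt t
    rw [hw1] at this
    rw [hw'def]
    simp only [← this]
    have h1 : ((1:ℚ):ℝ) = (1:ℝ) := by norm_num
    rw [← h1, hπq]
  -- rational coordinates of d ∈ t
  set cQ : E Γ Δ → ↑(vars Γ Δ) → ℚ := fun d p =>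
    ((fApp (F d) Δ).count ↑p : ℚ) - ((fApp (F d) Γ).count ↑p : ℚ) with hcQdef
  have hdc : ∀ d ∈ t, ∀ p : ↑(vars Γ Δ), d p = ((cQ d p : ℚ) : ℝ) := by
    intro d hd p
    have h1 : d p = wvec Γ Δ (F d) p := by rw [hF d hd]
    rw [h1, hcQdef]
    push_cast
    rfl
  -- (b) coordinate equations over ℚ
  have hb : ∀ p : ↑(vars Γ Δ), ∑ d ∈ t, w' d * cQ d p = 0 := by
    intro p
    have hco : ∑ d ∈ t, wt d * d p = 0 := by
      have := congrFun hsum p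
      rw [Finset.sum_apply] at this
      simpa using this
    have : π (∑ d ∈ t, wt d * d p) = 0 := by rw [hco, map_zero]
    rw [map_sum] at this
    rw [← this]
    apply Finset.sum_congr rfl
    intro d hd
    rw [hdc d hd p, mul_comm (wt d) ((cQ d p : ℚ) : ℝ), hπsmul, mul_comm]
  -- (c) nonnegativity of rational weights via affine independence
  set wt' : E Γ Δ → ℝ := fun d => ((w' d : ℚ) : ℝ) with hwt'def
  have hsum' : ∑ d ∈ t, wt' d • d = 0 := by
    funext p
    rw [Finset.sum_apply]
    have : ∀ d ∈ t, (wt' d • d) p = ((w' d * cQ d p : ℚ) : ℝ) := by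
      intro d hd
      rw [Pi.smul_apply, smul_eq_mul, hdc d hd p, hwt'def]
      push_cast
      ring
    rw [Finset.sum_congr rfl this, ← Rat.cast_sum, hb p]
    simp
  have hw1' : ∑ d ∈ t, wt' d = 1 := by
    rw [hwt'def, ← Rat.cast_sum, ha, Rat.cast_one]
  have hattach : ∀ (g : E Γ Δ → ℝ) (z : E Γ Δ → E Γ Δ),
      ∑ i : ↑t, g ↑i • z ↑i = ∑ d ∈ t, g d • z d := by
    intro g z
    rw [Finset.univ_eq_attach, Finset.sum_attach t (fun d => g d • z d)]
  have hattach' : ∀ (g : E Γ Δ → ℝ), ∑ i : ↑t, g ↑i = ∑ d ∈ t, g d := by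
    intro g
    rw [Finset.univ_eq_attach, Finset.sum_attach t g]
  have hs1 : ∑ i : ↑t, (wt ∘ (↑)) i = 1 := (hattach' wt).trans hw1
  have hs2 : ∑ i : ↑t, (wt' ∘ (↑)) i = 1 := (hattach' wt').trans hw1'
  have hacq : Finset.univ.affineCombination ℝ ((↑) : ↑t → E Γ Δ) (wt ∘ (↑))
      = Finset.univ.affineCombination ℝ ((↑) : ↑t → E Γ Δ) (wt' ∘ (↑)) := by
    rw [Finset.affineCombination_eq_linear_combination _ _ _ hs1,
        Finset.affineCombination_eq_linear_combination _ _ _ hs2]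
    have e1 := hattach wt id
    have e2 := hattach wt' id
    simp only [id] at e1 e2
    simp only [Function.comp_apply]
    rw [e1, e2, hsum, hsum']
  have hind := hai.indicator_eq_of_affineCombination_eq Finset.univ Finset.univ
    (wt ∘ (↑)) (wt' ∘ (↑)) hs1 hs2 hacq
  have hw'0 : ∀ d ∈ t, 0 ≤ w' d := by
    intro d hd
    have h1 := congrFun hind ⟨d, hd⟩
    simp only [Set.indicator_apply, Finset.coe_univ, Set.mem_univ, if_pos,
      Function.comp_apply] at h1
    have h2 := hw0 d hd
    rw [h1] at h2
    have h3 : (0:ℝ) ≤ ((w' d : ℚ) : ℝ) := h2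
    exact_mod_cast h3
  -- clear denominators
  set N : ℕ := ∏ d ∈ t, (w' d).den with hNdef
  have hNpos : 0 < N :=
    Finset.prod_pos fun d _ => Nat.pos_of_ne_zero (Rat.den_ne_zero _)
  set m : E Γ Δ → ℕ := fun d => (w' d).num.toNat * (N / (w' d).den) with hmdef
  have hmQ : ∀ d ∈ t, ((m d : ℕ) : ℚ) = w' d * N := by
    intro d hd
    have hdvd : (w' d).den ∣ N := Finset.dvd_prod_of_mem _ hd
    have hnum : (0:ℤ) ≤ (w' d).num := Rat.num_nonneg.mpr (hw'0 d hd)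
    obtain ⟨k, hk⟩ := hdvd
    have hNk : N / (w' d).den = k := by
      rw [hk]; exact Nat.mul_div_cancel_left _ (Nat.pos_of_ne_zero (Rat.den_ne_zero _))
    have hden0 : (((w' d).den : ℚ)) ≠ 0 := Nat.cast_ne_zero.mpr (Rat.den_ne_zero _)
    have hnd : w' d * ((w' d).den : ℚ) = ((w' d).num : ℚ) := by
      have h := div_mul_cancel₀ (((w' d).num : ℚ)) hden0
      rw [Rat.num_div_den] at h
      exact h
    have htn : (((w' d).num.toNat : ℕ) : ℚ) = ((w' d).num : ℚ) := by
      exact_mod_cast Int.toNat_of_nonneg hnum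
    have hm1 : ((m d : ℕ) : ℚ) = (((w' d).num.toNat : ℕ) : ℚ) * (k : ℚ) := by
      rw [hmdef]
      push_cast [hNk]
      ring
    rw [hm1, htn, ← hnd, hk]
    push_cast
    ring
  have hmsumQ : ((∑ d ∈ t, m d : ℕ) : ℚ) = N := by
    push_cast
    rw [Finset.sum_congr rfl hmQ, ← Finset.sum_mul, ha, one_mul]
  have hmsum : 0 < ∑ d ∈ t, m d := by
    have : (0:ℚ) < ((∑ d ∈ t, m d : ℕ) : ℚ) := by
      rw [hmsumQ]; exact_mod_cast hNpos
    exact_mod_cast this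
  -- count equations over ℕ
  have hcount0 : ∀ (f : ℕ → Bool) (Θ : Multiset (Multiset ℕ × ℕ)),
      Θ ≤ Γ + Δ → ∀ p ∉ vars Γ Δ, (fApp f Θ).count p = 0 := by
    intro f Θ hΘ p hp
    apply Multiset.count_eq_zero_of_notMem
    intro hmem
    apply hp
    have h1 : p ∈ (fApp f Θ).toFinset := Multiset.mem_toFinset.mpr hmem
    have h2 := fApp_toFinset_subset f Θ h1
    simp only [Multiset.mem_toFinset] at h2
    simp only [vars, Multiset.mem_toFinset]
    exact Multiset.mem_of_le (Multiset.map_le_map hΘ) h2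
  have hmp : ∀ p : ℕ, ∑ d ∈ t, m d * (fApp (F d) Γ).count p
      = ∑ d ∈ t, m d * (fApp (F d) Δ).count p := by
    intro p
    by_cases hp : p ∈ vars Γ Δ
    · have hbp := hb ⟨p, hp⟩
      have hb2 : ∑ d ∈ t, w' d * ((fApp (F d) Γ).count p : ℚ)
          = ∑ d ∈ t, w' d * ((fApp (F d) Δ).count p : ℚ) := by
        have : ∀ d ∈ t, w' d * cQ d ⟨p, hp⟩
            = w' d * ((fApp (F d) Δ).count p : ℚ)
              - w' d * ((fApp (F d) Γ).count p : ℚ) := by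
          intro d hd; rw [hcQdef]; ring
        rw [Finset.sum_congr rfl this, Finset.sum_sub_distrib, sub_eq_zero] at hbp
        exact hbp.symm
      have : ((∑ d ∈ t, m d * (fApp (F d) Γ).count p : ℕ) : ℚ)
          = ((∑ d ∈ t, m d * (fApp (F d) Δ).count p : ℕ) : ℚ) := by
        push_cast
        have eΓ : ∀ d ∈ t, ((m d : ℚ)) * ((fApp (F d) Γ).count p : ℚ)
            = (N : ℚ) * (w' d * ((fApp (F d) Γ).count p : ℚ)) := by
          intro d hd; rw [hmQ d hd]; ring
        have eΔ : ∀ d ∈ t, ((m d : ℚ)) * ((fApp (F d) Δ).count p : ℚ)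
            = (N : ℚ) * (w' d * ((fApp (F d) Δ).count p : ℚ)) := by
          intro d hd; rw [hmQ d hd]; ring
        rw [Finset.sum_congr rfl eΓ, Finset.sum_congr rfl eΔ, ← Finset.mul_sum,
          ← Finset.mul_sum, hb2]
      exact_mod_cast this
    · have e1 : ∀ d ∈ t, m d * (fApp (F d) Γ).count p = 0 := by
        intro d hd; rw [hcount0 (F d) Γ (Multiset.le_add_right _ _) p hp, mul_zero]
      have e2 : ∀ d ∈ t, m d * (fApp (F d) Δ).count p = 0 := by
        intro d hd; rw [hcount0 (F d) Δ (Multiset.le_add_left _ _) p hp, mul_zero]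
      rw [Finset.sum_congr rfl e1, Finset.sum_congr rfl e2]
  -- assemble the multiset
  refine ⟨∑ d ∈ t, Multiset.replicate (m d) (F d), ?_, ?_⟩
  · obtain ⟨d, hd, hmd⟩ : ∃ d ∈ t, 0 < m d := by
      by_contra hc
      push_neg at hc
      have : ∑ d ∈ t, m d = 0 := Finset.sum_eq_zero fun d hd => Nat.le_zero.mp (hc d hd)
      omega
    intro hM0
    have hmem : F d ∈ (∑ d ∈ t, Multiset.replicate (m d) (F d)) := by
      apply Multiset.mem_of_le (Finset.single_le_sum
        (f := fun d => Multiset.replicate (m d) (F d)) (fun _ _ => Multiset.zero_le _) hd)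
      exact Multiset.mem_replicate.mpr ⟨hmd.ne', rfl⟩
    rw [hM0] at hmem
    exact Multiset.notMem_zero _ hmem
  · have key : ∀ Θ : Multiset (Multiset ℕ × ℕ),
        ((∑ d ∈ t, Multiset.replicate (m d) (F d)).map fun f => fApp f Θ).sum
        = ∑ d ∈ t, m d • fApp (F d) Θ := by
      intro Θ
      have hhom := map_sum (⟨⟨fun M : Multiset (ℕ → Bool) => (M.map fun f => fApp f Θ).sum,
        by simp⟩, fun x y => by simp⟩ : Multiset (ℕ → Bool) →+ Multiset ℕ)
        (fun d => Multiset.replicate (m d) (F d)) t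
      simp only [AddMonoidHom.coe_mk, ZeroHom.coe_mk] at hhom
      refine hhom.trans ?_
      apply Finset.sum_congr rfl
      intro d _
      show ((Multiset.replicate (m d) (F d)).map fun f => fApp f Θ).sum = _
      rw [Multiset.map_replicate, Multiset.sum_replicate]
    rw [key Γ, key Δ]
    ext p
    rw [← Multiset.coe_countAddMonoidHom, map_sum, map_sum]
    simp only [Multiset.coe_countAddMonoidHom, Multiset.count_nsmul]
    exact hmp p


theorem hard (h : ∀ v : ℕ → ℚ, ∃ f : ℕ → Bool,
      ((fApp f Γ).map v).sum ≤ ((fApp f Δ).map v).sum) :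
    ∃ n : ℕ, 0 < n ∧ ∃ fs : Fin n → ℕ → Bool,
        (Finset.univ.sum fun i => fApp (fs i) Γ) =
        (Finset.univ.sum fun i => fApp (fs i) Δ) := by
  obtain ⟨M, hM0, hMeq⟩ := exists_multiset Γ Δ (zero_mem_hull Γ Δ h)
  refine ⟨M.toList.length, ?_, fun i => M.toList.get i, ?_⟩
  · rw [Multiset.length_toList]
    exact Multiset.card_pos.mpr hM0
  · have e : ∀ Θ : Multiset (Multiset ℕ × ℕ),
        (Finset.univ.sum fun i : Fin M.toList.length => fApp (M.toList.get i) Θ)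
        = (M.map fun f => fApp f Θ).sum := by
      intro Θ
      have h1 : (Finset.univ.sum fun i : Fin M.toList.length => fApp (M.toList.get i) Θ)
          = (M.toList.map fun f => fApp f Θ).sum :=
        Fin.sum_univ_fun_getElem M.toList (fun f => fApp f Θ)
      rw [h1]
      conv_rhs => rw [← Multiset.coe_toList M]
      rw [Multiset.map_coe]
      rfl
    rw [e Γ, e Δ, hMeq]

end S19


/-- A labelled atomic sequent `Γ ⊢ Δ` is valid over ℚ (for every valuation,
some labelling function makes the selected left sum ≤ the selected right sum)
iff there exist finitely many labelling functions `f₁, …, fₙ` (n ≥ 1) with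
`⋃ᵢ fᵢ(Γ) = ⋃ᵢ fᵢ(Δ)` as multisets. -/
theorem stmt_19 (Γ Δ : Multiset (Multiset ℕ × ℕ)) :
    (∀ v : ℕ → ℚ, ∃ f : ℕ → Bool,
        ((fApp f Γ).map v).sum ≤ ((fApp f Δ).map v).sum) ↔
    (∃ n : ℕ, 0 < n ∧ ∃ fs : Fin n → ℕ → Bool,
        (Finset.univ.sum fun i => fApp (fs i) Γ) =
        (Finset.univ.sum fun i => fApp (fs i) Δ)) := by
  constructor
  · exact S19.hard Γ Δ
  · rintro ⟨n, hn, fs, hfs⟩ v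
    exact S19.easy Γ Δ n hn fs hfs v
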